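/- Let B be a connected building set on a finite set S with |S| ≤ 4. Then for all I_1, I_2 ∈ B with I_1 ∩ I_2 ≠ ∅, I_1 ⊄ I_2 and I_2 ⊄ I_1, at least one of the following holds: (i) I_1 ∩ I_2 ∈ B; (ii) I_1 ∪ I_2 = S and |(B|_{I_1 ∩ I_2})_max| ≤ 2. (Consequently, by the main theorem, every toric variety of dimension ≤ 3 associated to a connected building set is weak Fano.) -/

import Mathlib

/-- A building set on a nonempty finite set `S`: a finite set of nonempty subsets of `S`
closed under unions of intersecting members, and containing all singletons. -/
def IsBuilding (S : Finset ℕ) (B : Finset (Finset ℕ)) : Prop :=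
  (∀ I ∈ B, I ⊆ S ∧ I.Nonempty) ∧
  (∀ I ∈ B, ∀ J ∈ B, (I ∩ J).Nonempty → I ∪ J ∈ B) ∧
  (∀ i ∈ S, ({i} : Finset ℕ) ∈ B)

/-- The set of maximal (by inclusion) elements of `B`. -/
def Bmax (B : Finset (Finset ℕ)) : Finset (Finset ℕ) :=
  B.filter (fun I => ∀ J ∈ B, I ⊆ J → I = J)

/-- The restriction `B|_C = {I ∈ B : I ⊆ C}`. -/
def restrict (B : Finset (Finset ℕ)) (C : Finset ℕ) : Finset (Finset ℕ) :=
  B.filter (fun I => I ⊆ C)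

/-- `N` is a nested set of `B`: a subset of `B \ Bmax B` whose members are pairwise
nested or disjoint, such that no union of `k ≥ 2` pairwise disjoint members lies in `B`. -/
def IsNested (B N : Finset (Finset ℕ)) : Prop :=
  N ⊆ B \ Bmax B ∧
  (∀ I ∈ N, ∀ J ∈ N, I ⊆ J ∨ J ⊆ I ∨ I ∩ J = ∅) ∧
  (∀ F ⊆ N, 2 ≤ F.card → (∀ I ∈ F, ∀ J ∈ F, I ≠ J → I ∩ J = ∅) → F.sup id ∉ B)

/-- `N` is a maximal (by inclusion) nested set of `B`. -/
def MaxNested (B N : Finset (Finset ℕ)) : Prop :=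
  IsNested B N ∧ ∀ N' : Finset (Finset ℕ), IsNested B N' → N ⊆ N' → N = N'

lemma bmax_restrict_pairwise (S : Finset ℕ) (B : Finset (Finset ℕ)) (hB : IsBuilding S B)
    (C : Finset ℕ) :
    ∀ I ∈ Bmax (restrict B C), ∀ J ∈ Bmax (restrict B C), I ≠ J → I ∩ J = ∅ := by
  intro I hI J hJ hne
  rw [Bmax, Finset.mem_filter] at hI hJ
  obtain ⟨hIR, hImax⟩ := hI
  obtain ⟨hJR, hJmax⟩ := hJ
  rw [restrict, Finset.mem_filter] at hIR hJR
  obtain ⟨hIB, hIC⟩ := hIR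
  obtain ⟨hJB, hJC⟩ := hJR
  by_contra h
  have hne' : (I ∩ J).Nonempty := Finset.nonempty_iff_ne_empty.mpr h
  have hu : I ∪ J ∈ B := hB.2.1 I hIB J hJB hne'
  have huC : I ∪ J ⊆ C := Finset.union_subset hIC hJC
  have humem : I ∪ J ∈ restrict B C := by rw [restrict, Finset.mem_filter]; exact ⟨hu, huC⟩
  have h1 := hImax (I ∪ J) humem Finset.subset_union_left
  have h2 := hJmax (I ∪ J) humem Finset.subset_union_right
  exact hne (h1.trans h2.symm)

lemma bmax_restrict_card_le (S : Finset ℕ) (B : Finset (Finset ℕ)) (hB : IsBuilding S B)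
    (C : Finset ℕ) : (Bmax (restrict B C)).card ≤ C.card := by
  set M := Bmax (restrict B C) with hM
  have hmem : ∀ I ∈ M, I ⊆ C ∧ I.Nonempty := by
    intro I hI
    simp only [hM, Bmax, restrict, Finset.mem_filter] at hI
    exact (by have hI' := Finset.mem_filter.mp (show I ∈ Bmax (restrict B C) from hI); have hI'' := Finset.mem_filter.mp hI'.1; exact ⟨hI''.2, (hB.1 I hI''.1).2⟩)
  have hdisj := bmax_restrict_pairwise S B hB C
  have h1 : M.card ≤ ∑ I ∈ M, I.card := by
    calc M.card = ∑ _I ∈ M, 1 := by simp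
    _ ≤ ∑ I ∈ M, I.card :=
      Finset.sum_le_sum (fun I hI => Finset.card_pos.mpr (hmem I hI).2)
  have h2 : ∑ I ∈ M, I.card = (M.biUnion id).card :=
    (Finset.card_biUnion (fun x hx y hy hxy =>
      Finset.disjoint_iff_inter_eq_empty.mpr (hdisj x hx y hy hxy))).symm
  have h3 : M.biUnion id ⊆ C := by
    intro x hx
    rw [Finset.mem_biUnion] at hx
    obtain ⟨I, hI, hxI⟩ := hx
    exact (hmem I hI).1 hxI
  exact h1.trans (h2 ▸ Finset.card_le_card h3)

/-- For a connected building set on a set `S` with `|S| ≤ 4`, the weak-Fano condition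
of the main theorem holds for every incomparable intersecting pair in `B`. -/
theorem stmt_14 (S : Finset ℕ) (hS : S.Nonempty) (hcard : S.card ≤ 4)
    (B : Finset (Finset ℕ)) (hB : IsBuilding S B) (hconn : Bmax B = {S})
    (I₁ I₂ : Finset ℕ) (hI₁ : I₁ ∈ B) (hI₂ : I₂ ∈ B)
    (hint : (I₁ ∩ I₂).Nonempty) (h12 : ¬I₁ ⊆ I₂) (h21 : ¬I₂ ⊆ I₁) :
    I₁ ∩ I₂ ∈ B ∨
      (I₁ ∪ I₂ = S ∧ (Bmax (restrict B (I₁ ∩ I₂))).card ≤ 2) := by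
  rcases Nat.lt_or_ge (I₁ ∩ I₂).card 2 with h | h
  · left
    have hpos : 0 < (I₁ ∩ I₂).card := Finset.card_pos.mpr hint
    have h1 : (I₁ ∩ I₂).card = 1 := by omega
    obtain ⟨i, hi⟩ := Finset.card_eq_one.mp h1
    have hiS : i ∈ S := by
      have : i ∈ I₁ ∩ I₂ := by rw [hi]; simp
      exact (hB.1 I₁ hI₁).1 (Finset.mem_inter.mp this).1
    rw [hi]
    exact hB.2.2 i hiS
  · right
    obtain ⟨a, haI₁, haI₂⟩ := Finset.not_subset.mp h12
    obtain ⟨b, hbI₂, hbI₁⟩ := Finset.not_subset.mp h21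
    have hab : a ≠ b := fun h => hbI₁ (h ▸ haI₁)
    have haint : a ∉ I₁ ∩ I₂ := fun h => haI₂ (Finset.mem_inter.mp h).2
    have hbint : b ∉ I₁ ∩ I₂ := fun h => hbI₁ (Finset.mem_inter.mp h).1
    set T := insert a (insert b (I₁ ∩ I₂)) with hT
    have hTsub : T ⊆ I₁ ∪ I₂ := by
      intro x hx
      simp only [hT, Finset.mem_insert] at hx
      rcases hx with rfl | rfl | hx
      · exact Finset.mem_union_left _ haI₁
      · exact Finset.mem_union_right _ hbI₂
      · exact Finset.mem_union_left _ (Finset.mem_inter.mp hx).1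
    have hTcard : T.card = (I₁ ∩ I₂).card + 2 := by
      rw [hT, Finset.card_insert_of_notMem, Finset.card_insert_of_notMem hbint]
      simp only [Finset.mem_insert]
      push_neg
      exact ⟨hab, haint⟩
    have hSsub : I₁ ∪ I₂ ⊆ S := Finset.union_subset (hB.1 I₁ hI₁).1 (hB.1 I₂ hI₂).1
    have hcard4 : 4 ≤ (I₁ ∪ I₂).card := by
      have := Finset.card_le_card hTsub
      omega
    have hSle : S.card ≤ (I₁ ∪ I₂).card := le_trans hcard ‹4 ≤ (I₁ ∪ I₂).card›
    refine ⟨Finset.eq_of_subset_of_card_le hSsub hSle, ?_⟩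
    have hintle : (I₁ ∩ I₂).card ≤ 2 := by
      have hTS : T ⊆ S := hTsub.trans hSsub
      have := Finset.card_le_card hTS
      omega
    exact le_trans (bmax_restrict_card_le S B hB (I₁ ∩ I₂)) hintle
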